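/- If f : A → B is a fibration in a tribe E, then the summation functor Σ_f : E(A) → E(B), (X, p) ↦ (X, f∘p), preserves and reflects homotopy equivalences: a morphism w of E(A) is a homotopy equivalence in the tribe E(A) if and only if Σ_f(w) is a homotopy equivalence in the tribe E(B). -/

import Mathlib

open CategoryTheory CategoryTheory.Limits

universe w v u v' u' v'' u''

/-- A *clan* structure on a category `E`: a terminal object together with a class of
maps (the *fibrations*) containing the isomorphisms, closed under composition and
base changes (every fibration is carrable and any pullback of a fibration is a
fibration), and containing every map to the terminal object. -/
structure Clan (E : Type u) [Category.{v} E] where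
  fib : MorphismProperty E
  one : E
  one_isTerminal : IsTerminal one
  fib_of_isIso : ∀ ⦃A B : E⦄ (f : A ⟶ B), IsIso f → fib f
  fib_comp : ∀ ⦃A B C : E⦄ {f : A ⟶ B} {g : B ⟶ C}, fib f → fib g → fib (f ≫ g)
  carrable : ∀ ⦃A B X : E⦄ (f : A ⟶ B) ⦃p : X ⟶ B⦄, fib p →
    ∃ (P : E) (p₁ : P ⟶ A) (p₂ : P ⟶ X), IsPullback p₁ p₂ f p
  fib_baseChange : ∀ ⦃P A X B : E⦄ {p₁ : P ⟶ A} {p₂ : P ⟶ X} {f : A ⟶ B} {p : X ⟶ B},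
    IsPullback p₁ p₂ f p → fib p → fib p₁
  fib_toOne : ∀ X : E, fib (one_isTerminal.from X)

/-- A *morphism of clans* is a functor taking fibrations to fibrations, preserving
base changes of fibrations, and taking the terminal object to a terminal object. -/
structure IsClanMorphism {E : Type u} {E' : Type u'} [Category.{v} E] [Category.{v'} E']
    (C : Clan E) (D : Clan E') (F : E ⥤ E') : Prop where
  map_fib : ∀ ⦃A B : E⦄ (f : A ⟶ B), C.fib f → D.fib (F.map f)
  map_isPullback : ∀ ⦃P A X B : E⦄ {p₁ : P ⟶ A} {p₂ : P ⟶ X} {f : A ⟶ B} {p : X ⟶ B},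
    IsPullback p₁ p₂ f p → C.fib p →
      IsPullback (F.map p₁) (F.map p₂) (F.map f) (F.map p)
  preserves_terminal : Nonempty (IsTerminal (F.obj C.one))

/-- The local category `E(A)`: the full subcategory of `Over A` spanned by the
fibrations `X ↠ A`. -/
abbrev ClanSlice {E : Type u} [Category.{v} E] (C : Clan E) (A : E) :=
  ObjectProperty.FullSubcategory (fun X : Over A => C.fib X.hom)

/-- The underlying morphism of `Over A` of a morphism of `ClanSlice C A`. -/
def ClanSlice.homOf {E : Type u} [Category.{v} E] {C : Clan E} {A : E}
    {X Y : ClanSlice C A} (u : X ⟶ Y) : X.obj ⟶ Y.obj := u.hom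

/-- A map in a clan is *anodyne* if it has the left lifting property with respect to
every fibration. -/
def Anodyne {E : Type u} [Category.{v} E] (C : Clan E) : MorphismProperty E :=
  fun _ _ u => ∀ ⦃X Y : E⦄ (f : X ⟶ Y), C.fib f → HasLiftingProperty u f

/-- A *tribe* is a clan in which every map factors as an anodyne map followed by a
fibration, and every base change of an anodyne map along a fibration is anodyne. -/
structure Tribe (E : Type u) [Category.{v} E] extends Clan E where
  exists_fact : ∀ ⦃A B : E⦄ (f : A ⟶ B), ∃ (Z : E) (u : A ⟶ Z) (p : Z ⟶ B),
    Anodyne toClan u ∧ fib p ∧ u ≫ p = f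
  anodyne_baseChange : ∀ ⦃P A X B : E⦄ {p₁ : P ⟶ A} {p₂ : P ⟶ X} {f : A ⟶ B} {u : X ⟶ B},
    IsPullback p₁ p₂ f u → fib f → Anodyne toClan u → Anodyne toClan p₁

/-- A *path object* for `B`: a factorization of the diagonal `B ⟶ B × B` as an
anodyne map `σ` followed by a fibration `(∂₀, ∂₁)`.  The product `B × B` is
witnessed by a pullback square over the terminal object. -/
structure PathObj {E : Type u} [Category.{v} E] (T : Tribe E) (B : E) where
  P : E
  σ : B ⟶ P
  d₀ : P ⟶ B
  d₁ : P ⟶ B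
  σ_d₀ : σ ≫ d₀ = 𝟙 B
  σ_d₁ : σ ≫ d₁ = 𝟙 B
  anodyne_σ : Anodyne T.toClan σ
  BB : E
  pr₁ : BB ⟶ B
  pr₂ : BB ⟶ B
  isProd : IsPullback pr₁ pr₂ (T.one_isTerminal.from B) (T.one_isTerminal.from B)
  pair : P ⟶ BB
  pair_pr₁ : pair ≫ pr₁ = d₀
  pair_pr₂ : pair ≫ pr₂ = d₁
  fib_pair : T.fib pair

/-- Two maps `f g : A ⟶ B` in a tribe are *homotopic* if there are a path object for
`B` and a homotopy `H : A ⟶ PB` with `∂₀ ∘ H = f` and `∂₁ ∘ H = g`. -/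
def Homotopic {E : Type u} [Category.{v} E] (T : Tribe E) {A B : E} (f g : A ⟶ B) : Prop :=
  ∃ (Q : PathObj T B) (H : A ⟶ Q.P), H ≫ Q.d₀ = f ∧ H ≫ Q.d₁ = g

/-- A map is a *homotopy equivalence* if it admits a homotopy inverse. -/
def IsHomotopyEquiv {E : Type u} [Category.{v} E] (T : Tribe E) {X Y : E} (f : X ⟶ Y) : Prop :=
  ∃ g : Y ⟶ X, Homotopic T (f ≫ g) (𝟙 X) ∧ Homotopic T (g ≫ f) (𝟙 Y)

/-- The local category `E(A)` of a tribe: the full subcategory of `Over A` spanned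
by the fibrations `X ↠ A`. -/
abbrev TribeSlice {E : Type u} [Category.{v} E] (T : Tribe E) (A : E) :=
  ObjectProperty.FullSubcategory (fun X : Over A => T.fib X.hom)

/-- The underlying morphism of `Over A` of a morphism of `TribeSlice T A`. -/
def TribeSlice.homOf {E : Type u} [Category.{v} E] {T : Tribe E} {A : E}
    {X Y : TribeSlice T A} (u : X ⟶ Y) : X.obj ⟶ Y.obj := u.hom

/-- A *morphism of tribes* is a morphism of clans that moreover takes anodyne maps
to anodyne maps. -/
structure IsTribeMorphism {E : Type u} {E' : Type u'} [Category.{v} E] [Category.{v'} E']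
    (T : Tribe E) (T' : Tribe E') (F : E ⥤ E')
    extends IsClanMorphism T.toClan T'.toClan F : Prop where
  map_anodyne : ∀ ⦃A B : E⦄ (u : A ⟶ B), Anodyne T.toClan u → Anodyne T'.toClan (F.map u)

/-- The homotopy relation, as a `HomRel`; the homotopy category `Ho(E)` is the
quotient of `E` by this congruence. -/
def HoRel {E : Type u} [Category.{v} E] (T : Tribe E) : HomRel E :=
  fun {_ _} f g => Homotopic T f g

/-! ### Auxiliary development -/

section TribeLemmas

variable {D : Type u''} [Category.{v''} D] {T : Tribe D}

/-- The flipped path object. -/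
def PathObj.flip {B : D} (Q : PathObj T B) : PathObj T B where
  P := Q.P
  σ := Q.σ
  d₀ := Q.d₁
  d₁ := Q.d₀
  σ_d₀ := Q.σ_d₁
  σ_d₁ := Q.σ_d₀
  anodyne_σ := Q.anodyne_σ
  BB := Q.BB
  pr₁ := Q.pr₂
  pr₂ := Q.pr₁
  isProd := Q.isProd.flip
  pair := Q.pair
  pair_pr₁ := Q.pair_pr₂
  pair_pr₂ := Q.pair_pr₁
  fib_pair := Q.fib_pair

theorem PathObj.fib_pr₁ {B : D} (Q : PathObj T B) : T.fib Q.pr₁ :=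
  T.fib_baseChange Q.isProd (T.fib_toOne B)

theorem PathObj.fib_pr₂ {B : D} (Q : PathObj T B) : T.fib Q.pr₂ :=
  T.fib_baseChange Q.isProd.flip (T.fib_toOne B)

theorem PathObj.fib_d₀ {B : D} (Q : PathObj T B) : T.fib Q.d₀ := by
  rw [← Q.pair_pr₁]; exact T.fib_comp Q.fib_pair Q.fib_pr₁

theorem PathObj.fib_d₁ {B : D} (Q : PathObj T B) : T.fib Q.d₁ := by
  rw [← Q.pair_pr₂]; exact T.fib_comp Q.fib_pair Q.fib_pr₂

theorem existsPathObj (T : Tribe D) (B : D) : Nonempty (PathObj T B) := by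
  obtain ⟨BB, pr₁, pr₂, hpb⟩ := T.carrable (T.one_isTerminal.from B) (T.fib_toOne B)
  obtain ⟨P, σ, pairP, hσ, hfib, hcomp⟩ := T.exists_fact (hpb.lift (𝟙 B) (𝟙 B) rfl)
  refine ⟨⟨P, σ, pairP ≫ pr₁, pairP ≫ pr₂, ?_, ?_, hσ, BB, pr₁, pr₂, hpb, pairP, rfl, rfl,
    hfib⟩⟩
  · rw [← Category.assoc, hcomp, hpb.lift_fst]
  · rw [← Category.assoc, hcomp, hpb.lift_snd]

/-- Lifting a "formal homotopy" into an actual path object. -/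
theorem exists_theta {B W : D} {σw : B ⟶ W} (hσw : Anodyne T.toClan σw)
    {w₀ w₁ : W ⟶ B} (h0 : σw ≫ w₀ = 𝟙 B) (h1 : σw ≫ w₁ = 𝟙 B) (Q : PathObj T B) :
    ∃ θ : W ⟶ Q.P, θ ≫ Q.d₀ = w₀ ∧ θ ≫ Q.d₁ = w₁ := by
  haveI := hσw _ Q.fib_pair
  have comm : Q.σ ≫ Q.pair = σw ≫ Q.isProd.lift w₀ w₁ (T.one_isTerminal.hom_ext _ _) := by
    apply Q.isProd.hom_ext
    · rw [Category.assoc, Category.assoc, Q.pair_pr₁, Q.isProd.lift_fst, Q.σ_d₀, h0]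
    · rw [Category.assoc, Category.assoc, Q.pair_pr₂, Q.isProd.lift_snd, Q.σ_d₁, h1]
  have sq : CommSq Q.σ σw Q.pair (Q.isProd.lift w₀ w₁ (T.one_isTerminal.hom_ext _ _)) := ⟨comm⟩
  refine ⟨sq.lift, ?_, ?_⟩
  · rw [← Q.pair_pr₁, ← Category.assoc, sq.fac_right, Q.isProd.lift_fst]
  · rw [← Q.pair_pr₂, ← Category.assoc, sq.fac_right, Q.isProd.lift_snd]

/-- Key transfer lemma: any "formal path object data" induces homotopies. -/
theorem homotopic_of_common_section {B W X : D} {σw : B ⟶ W} (hσw : Anodyne T.toClan σw)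
    {w₀ w₁ : W ⟶ B} (h0 : σw ≫ w₀ = 𝟙 B) (h1 : σw ≫ w₁ = 𝟙 B) (H : X ⟶ W) :
    Homotopic T (H ≫ w₀) (H ≫ w₁) := by
  obtain ⟨Q⟩ := existsPathObj T B
  obtain ⟨θ, hθ0, hθ1⟩ := exists_theta hσw h0 h1 Q
  exact ⟨Q, H ≫ θ, by rw [Category.assoc, hθ0], by rw [Category.assoc, hθ1]⟩

theorem Homotopic.of_eq' {A B : D} {f g : A ⟶ B} (T : Tribe D) (h : f = g) :
    Homotopic T f g := by
  obtain ⟨Q⟩ := existsPathObj T B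
  exact ⟨Q, f ≫ Q.σ, by rw [Category.assoc, Q.σ_d₀, Category.comp_id],
    by rw [Category.assoc, Q.σ_d₁, Category.comp_id, h]⟩

theorem htp_congr {A B : D} {f g f' g' : A ⟶ B} (h : Homotopic T f g)
    (hf : f = f') (hg : g = g') : Homotopic T f' g' := hf ▸ hg ▸ h

theorem Homotopic.to_pathObj {A B : D} {f g : A ⟶ B} (h : Homotopic T f g)
    (Q' : PathObj T B) : ∃ K : A ⟶ Q'.P, K ≫ Q'.d₀ = f ∧ K ≫ Q'.d₁ = g := by
  obtain ⟨Q, H, h0, h1⟩ := h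
  obtain ⟨θ, hθ0, hθ1⟩ := exists_theta Q.anodyne_σ Q.σ_d₀ Q.σ_d₁ Q'
  exact ⟨H ≫ θ, by rw [Category.assoc, hθ0, h0], by rw [Category.assoc, hθ1, h1]⟩

theorem Homotopic.symm' {A B : D} {f g : A ⟶ B} (h : Homotopic T f g) :
    Homotopic T g f := by
  obtain ⟨Q, H, h0, h1⟩ := h
  exact ⟨Q.flip, H, h1, h0⟩

theorem Homotopic.precomp {A A' B : D} {f g : A ⟶ B} (h : Homotopic T f g) (u : A' ⟶ A) :
    Homotopic T (u ≫ f) (u ≫ g) := by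
  obtain ⟨Q, H, h0, h1⟩ := h
  exact ⟨Q, u ≫ H, by rw [Category.assoc, h0], by rw [Category.assoc, h1]⟩

theorem Homotopic.postcomp {A B C' : D} {f g : A ⟶ B} (h : Homotopic T f g) (v : B ⟶ C') :
    Homotopic T (f ≫ v) (g ≫ v) := by
  obtain ⟨Q, H, h0, h1⟩ := h
  obtain ⟨Q'⟩ := existsPathObj T C'
  haveI := Q.anodyne_σ _ Q'.fib_pair
  have comm : (v ≫ Q'.σ) ≫ Q'.pair =
      Q.σ ≫ Q'.isProd.lift (Q.d₀ ≫ v) (Q.d₁ ≫ v) (T.one_isTerminal.hom_ext _ _) := by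
    apply Q'.isProd.hom_ext
    · slice_lhs 3 4 => rw [Q'.pair_pr₁]
      slice_rhs 2 3 => rw [Q'.isProd.lift_fst]
      slice_lhs 2 3 => rw [Q'.σ_d₀]
      slice_rhs 1 2 => rw [Q.σ_d₀]
      simp
    · slice_lhs 3 4 => rw [Q'.pair_pr₂]
      slice_rhs 2 3 => rw [Q'.isProd.lift_snd]
      slice_lhs 2 3 => rw [Q'.σ_d₁]
      slice_rhs 1 2 => rw [Q.σ_d₁]
      simp
  have sq : CommSq (v ≫ Q'.σ) Q.σ Q'.pair
      (Q'.isProd.lift (Q.d₀ ≫ v) (Q.d₁ ≫ v) (T.one_isTerminal.hom_ext _ _)) := ⟨comm⟩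
  have m0 : sq.lift ≫ Q'.d₀ = Q.d₀ ≫ v := by
    rw [← Q'.pair_pr₁, ← Category.assoc, sq.fac_right, Q'.isProd.lift_fst]
  have m1 : sq.lift ≫ Q'.d₁ = Q.d₁ ≫ v := by
    rw [← Q'.pair_pr₂, ← Category.assoc, sq.fac_right, Q'.isProd.lift_snd]
  refine ⟨Q', H ≫ sq.lift, ?_, ?_⟩
  · rw [Category.assoc, m0, ← Category.assoc, h0]
  · rw [Category.assoc, m1, ← Category.assoc, h1]

/-- The degenerate lift into a pullback along an endpoint of a "path object like" datum
is anodyne. -/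
theorem degen_anodyne {B P X : D} {σ : B ⟶ P} (hσ : Anodyne T.toClan σ)
    {d : P ⟶ B} (hd : σ ≫ d = 𝟙 B) {p : X ⟶ B} (hp : T.fib p)
    {Qo : D} {q₁ : Qo ⟶ P} {q₂ : Qo ⟶ X} (pb : IsPullback q₁ q₂ d p)
    {j : X ⟶ Qo} (hj₁ : j ≫ q₁ = p ≫ σ) (hj₂ : j ≫ q₂ = 𝟙 X) :
    Anodyne T.toClan j := by
  have fibq₁ : T.fib q₁ := T.fib_baseChange pb hp
  have big : IsPullback (j ≫ q₂) p p (σ ≫ d) := by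
    rw [hj₂, hd]; exact IsPullback.of_id_fst
  exact T.anodyne_baseChange (IsPullback.of_right big hj₁ pb.flip) fibq₁ hσ

/-- Transport along a homotopy in the base of a fibration. -/
theorem transport {W V Z : D} {π : W ⟶ V} (hπ : T.fib π) (Q : PathObj T V)
    {e : Z ⟶ W} {K : Z ⟶ Q.P} (hK : K ≫ Q.d₀ = e ≫ π) :
    ∃ H : Z ⟶ W, H ≫ π = K ≫ Q.d₁ := by
  obtain ⟨R, r₁, r₂, pbR⟩ := T.carrable Q.d₀ hπ
  have hcone : (π ≫ Q.σ) ≫ Q.d₀ = 𝟙 W ≫ π := by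
    rw [Category.assoc, Q.σ_d₀, Category.comp_id, Category.id_comp]
  have hjW : Anodyne T.toClan (pbR.lift (π ≫ Q.σ) (𝟙 W) hcone) :=
    degen_anodyne Q.anodyne_σ Q.σ_d₀ hπ pbR (pbR.lift_fst _ _ _) (pbR.lift_snd _ _ _)
  haveI := hjW _ hπ
  have comm : 𝟙 W ≫ π = pbR.lift (π ≫ Q.σ) (𝟙 W) hcone ≫ (r₁ ≫ Q.d₁) := by
    rw [Category.id_comp, ← Category.assoc, pbR.lift_fst, Category.assoc, Q.σ_d₁,
      Category.comp_id]
  have sq : CommSq (𝟙 W) (pbR.lift (π ≫ Q.σ) (𝟙 W) hcone) π (r₁ ≫ Q.d₁) := ⟨comm⟩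
  refine ⟨pbR.lift K e hK ≫ sq.lift, ?_⟩
  rw [Category.assoc, sq.fac_right, ← Category.assoc, pbR.lift_fst]

theorem exists_section {Z Y : D} {p : Z ⟶ Y} (hp : T.fib p) (hhe : IsHomotopyEquiv T p) :
    ∃ s : Y ⟶ Z, s ≫ p = 𝟙 Y := by
  obtain ⟨g, _, h2⟩ := hhe
  obtain ⟨Q⟩ := existsPathObj T Y
  obtain ⟨K, hK0, hK1⟩ := h2.to_pathObj Q
  obtain ⟨s, hs⟩ := transport hp Q (e := g) (K := K) hK0
  exact ⟨s, by rw [hs, hK1]⟩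

theorem isHomotopyEquiv_of_anodyne {X Y : D} {j : X ⟶ Y} (hj : Anodyne T.toClan j) :
    IsHomotopyEquiv T j := by
  haveI := hj _ (T.fib_toOne X)
  have sq : CommSq (𝟙 X) j (T.one_isTerminal.from X) (T.one_isTerminal.from Y) :=
    ⟨T.one_isTerminal.hom_ext _ _⟩
  set r := sq.lift with hr
  have hjr : j ≫ r = 𝟙 X := sq.fac_left
  obtain ⟨Q⟩ := existsPathObj T Y
  haveI := hj _ Q.fib_pair
  have comm : (j ≫ Q.σ) ≫ Q.pair =
      j ≫ Q.isProd.lift (r ≫ j) (𝟙 Y) (T.one_isTerminal.hom_ext _ _) := by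
    apply Q.isProd.hom_ext
    · slice_lhs 3 4 => rw [Q.pair_pr₁]
      slice_lhs 2 3 => rw [Q.σ_d₀]
      slice_rhs 2 3 => rw [Q.isProd.lift_fst]
      slice_rhs 1 2 => rw [hjr]
      simp
    · slice_lhs 3 4 => rw [Q.pair_pr₂]
      slice_lhs 2 3 => rw [Q.σ_d₁]
      slice_rhs 2 3 => rw [Q.isProd.lift_snd]
      try simp
  have sq2 : CommSq (j ≫ Q.σ) j Q.pair
      (Q.isProd.lift (r ≫ j) (𝟙 Y) (T.one_isTerminal.hom_ext _ _)) := ⟨comm⟩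
  refine ⟨r, Homotopic.of_eq' T hjr, ⟨Q, sq2.lift, ?_, ?_⟩⟩
  · rw [← Q.pair_pr₁, ← Category.assoc, sq2.fac_right, Q.isProd.lift_fst]
  · rw [← Q.pair_pr₂, ← Category.assoc, sq2.fac_right, Q.isProd.lift_snd]

theorem Homotopic.trans' {A B : D} {f g h : A ⟶ B} (hfg : Homotopic T f g)
    (hgh : Homotopic T g h) : Homotopic T f h := by
  obtain ⟨Q⟩ := existsPathObj T B
  obtain ⟨K₁, hK₁0, hK₁1⟩ := hfg.to_pathObj Q
  obtain ⟨K₂, hK₂0, hK₂1⟩ := hgh.to_pathObj Q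
  obtain ⟨V, v₁, v₂, pbV⟩ := T.carrable Q.d₁ Q.fib_d₀
  have icone : (Q.d₀ ≫ Q.σ) ≫ Q.d₁ = 𝟙 Q.P ≫ Q.d₀ := by
    rw [Category.assoc, Q.σ_d₁, Category.comp_id, Category.id_comp]
  have hi : Anodyne T.toClan (pbV.lift (Q.d₀ ≫ Q.σ) (𝟙 Q.P) icone) :=
    degen_anodyne Q.anodyne_σ Q.σ_d₁ Q.fib_d₀ pbV (pbV.lift_fst _ _ _) (pbV.lift_snd _ _ _)
  haveI := hi _ Q.fib_pair
  have comm : 𝟙 Q.P ≫ Q.pair = pbV.lift (Q.d₀ ≫ Q.σ) (𝟙 Q.P) icone ≫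
      Q.isProd.lift (v₁ ≫ Q.d₀) (v₂ ≫ Q.d₁) (T.one_isTerminal.hom_ext _ _) := by
    apply Q.isProd.hom_ext
    · slice_lhs 2 3 => rw [Q.pair_pr₁]
      slice_rhs 2 3 => rw [Q.isProd.lift_fst]
      slice_rhs 1 2 => rw [pbV.lift_fst]
      slice_rhs 2 3 => rw [Q.σ_d₀]
      try simp
    · slice_lhs 2 3 => rw [Q.pair_pr₂]
      slice_rhs 2 3 => rw [Q.isProd.lift_snd]
      slice_rhs 1 2 => rw [pbV.lift_snd]
      try simp
  have sq : CommSq (𝟙 Q.P) (pbV.lift (Q.d₀ ≫ Q.σ) (𝟙 Q.P) icone) Q.pair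
      (Q.isProd.lift (v₁ ≫ Q.d₀) (v₂ ≫ Q.d₁) (T.one_isTerminal.hom_ext _ _)) := ⟨comm⟩
  have hccone : K₁ ≫ Q.d₁ = K₂ ≫ Q.d₀ := by rw [hK₁1, hK₂0]
  have m0 : sq.lift ≫ Q.d₀ = v₁ ≫ Q.d₀ := by
    have h' := congrArg (fun t => t ≫ Q.pr₁) sq.fac_right
    rw [Category.assoc, Q.pair_pr₁, Q.isProd.lift_fst] at h'
    exact h'
  have m1 : sq.lift ≫ Q.d₁ = v₂ ≫ Q.d₁ := by
    have h' := congrArg (fun t => t ≫ Q.pr₂) sq.fac_right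
    rw [Category.assoc, Q.pair_pr₂, Q.isProd.lift_snd] at h'
    exact h'
  refine ⟨Q, pbV.lift K₁ K₂ hccone ≫ sq.lift, ?_, ?_⟩
  · rw [Category.assoc, m0, ← Category.assoc, pbV.lift_fst, hK₁0]
  · rw [Category.assoc, m1, ← Category.assoc, pbV.lift_snd, hK₂1]

theorem isHomotopyEquiv_id (T : Tribe D) (X : D) : IsHomotopyEquiv T (𝟙 X) :=
  ⟨𝟙 X, Homotopic.of_eq' T (by simp), Homotopic.of_eq' T (by simp)⟩

theorem isHomotopyEquiv_comp {A B C' : D} {a : A ⟶ B} {b : B ⟶ C'}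
    (ha : IsHomotopyEquiv T a) (hb : IsHomotopyEquiv T b) :
    IsHomotopyEquiv T (a ≫ b) := by
  obtain ⟨ai, ha1, ha2⟩ := ha
  obtain ⟨bi, hb1, hb2⟩ := hb
  refine ⟨bi ≫ ai, ?_, ?_⟩
  · exact (htp_congr ((hb1.postcomp ai).precomp a) (by simp) (by simp)).trans' ha1
  · exact (htp_congr ((ha2.postcomp b).precomp bi) (by simp) (by simp)).trans' hb2

theorem he_cancel_left {A B C' : D} {a : A ⟶ B} {b : B ⟶ C'}
    (hab : IsHomotopyEquiv T (a ≫ b)) (ha : IsHomotopyEquiv T a) :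
    IsHomotopyEquiv T b := by
  obtain ⟨m, hm1, hm2⟩ := hab
  obtain ⟨ai, _, ha2⟩ := ha
  refine ⟨m ≫ a, ?_, htp_congr hm2 (by simp) rfl⟩
  have s1 : Homotopic T (b ≫ m ≫ a) ((ai ≫ a) ≫ b ≫ m ≫ a) :=
    htp_congr (ha2.symm'.postcomp (b ≫ m ≫ a)) (by simp) rfl
  have s2 : Homotopic T ((ai ≫ a) ≫ b ≫ m ≫ a) (ai ≫ a) :=
    htp_congr ((hm1.postcomp a).precomp ai) (by simp) (by simp)
  exact (s1.trans' s2).trans' ha2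

theorem he_cancel_right {A B C' : D} {a : A ⟶ B} {b : B ⟶ C'}
    (hab : IsHomotopyEquiv T (a ≫ b)) (hb : IsHomotopyEquiv T b) :
    IsHomotopyEquiv T a := by
  obtain ⟨m, hm1, hm2⟩ := hab
  obtain ⟨bi, hb1, _⟩ := hb
  refine ⟨b ≫ m, htp_congr hm1 (by simp) rfl, ?_⟩
  have s1 : Homotopic T ((b ≫ m) ≫ a) (b ≫ m ≫ a ≫ b ≫ bi) :=
    htp_congr (hb1.symm'.precomp (b ≫ m ≫ a)) (by simp) (by simp)
  have s2 : Homotopic T (b ≫ m ≫ a ≫ b ≫ bi) (b ≫ bi) :=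
    htp_congr ((hm2.postcomp bi).precomp b) (by simp) (by simp)
  exact (s1.trans' s2).trans' hb1

theorem he_two_of_six {X₁ X₂ X₃ X₄ : D} {a : X₁ ⟶ X₂} {b : X₂ ⟶ X₃} {c : X₃ ⟶ X₄}
    (hab : IsHomotopyEquiv T (a ≫ b)) (hbc : IsHomotopyEquiv T (b ≫ c)) :
    IsHomotopyEquiv T b := by
  obtain ⟨m, hm1, hm2⟩ := hab
  obtain ⟨n, hn1, _⟩ := hbc
  have hrb : Homotopic T ((m ≫ a) ≫ b) (𝟙 X₃) := htp_congr hm2 (by simp) rfl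
  have hbl : Homotopic T (b ≫ c ≫ n) (𝟙 X₂) := htp_congr hn1 (by simp) rfl
  have s1 : Homotopic T (c ≫ n) (((m ≫ a) ≫ b) ≫ c ≫ n) :=
    htp_congr (hrb.symm'.postcomp (c ≫ n)) (by simp) rfl
  have s2 : Homotopic T (((m ≫ a) ≫ b) ≫ c ≫ n) (m ≫ a) :=
    htp_congr (hbl.precomp (m ≫ a)) (by simp) (by simp)
  refine ⟨c ≫ n, hbl, ?_⟩
  exact ((s1.trans' s2).postcomp b).trans' hrb


theorem exists_homotopy_of_anodyne_eq {B₁ B₂ Z : D} {j : B₁ ⟶ B₂} (hj : Anodyne T.toClan j)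
    {a b : B₂ ⟶ Z} (h : j ≫ a = j ≫ b) (Q : PathObj T Z) :
    ∃ K : B₂ ⟶ Q.P, K ≫ Q.d₀ = a ∧ K ≫ Q.d₁ = b := by
  haveI := hj _ Q.fib_pair
  have comm : (j ≫ a ≫ Q.σ) ≫ Q.pair =
      j ≫ Q.isProd.lift a b (T.one_isTerminal.hom_ext _ _) := by
    apply Q.isProd.hom_ext
    · slice_lhs 4 5 => rw [Q.pair_pr₁]
      slice_lhs 3 4 => rw [Q.σ_d₀]
      slice_rhs 2 3 => rw [Q.isProd.lift_fst]
      try simp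
    · slice_lhs 4 5 => rw [Q.pair_pr₂]
      slice_lhs 3 4 => rw [Q.σ_d₁]
      slice_rhs 2 3 => rw [Q.isProd.lift_snd]
      simp only [Category.comp_id]
      exact h
  have sq : CommSq (j ≫ a ≫ Q.σ) j Q.pair
      (Q.isProd.lift a b (T.one_isTerminal.hom_ext _ _)) := ⟨comm⟩
  refine ⟨sq.lift, ?_, ?_⟩
  · rw [← Q.pair_pr₁, ← Category.assoc, sq.fac_right, Q.isProd.lift_fst]
  · rw [← Q.pair_pr₂, ← Category.assoc, sq.fac_right, Q.isProd.lift_snd]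


end TribeLemmas


section SliceLemmas

open TribeSlice

variable {D : Type u''} [Category.{v''} D] (T : Tribe D) {C : D}
  (TS : Tribe (TribeSlice T C))
  (hTS : ∀ {U V : TribeSlice T C} (u : U ⟶ V), TS.fib u ↔ T.fib (TribeSlice.homOf u).left)

theorem slice_hom_ext {U V : TribeSlice T C} {u v : U ⟶ V}
    (h : (homOf u).left = (homOf v).left) : u = v := InducedCategory.hom_ext (Over.OverMorphism.ext h)

include hTS in
theorem anodyne_up {U V : TribeSlice T C} {u : U ⟶ V}
    (h : Anodyne T.toClan (homOf u).left) : Anodyne TS.toClan u := by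
  intro X Y fsl hfsl
  have hf : T.fib (homOf fsl).left := (hTS fsl).mp hfsl
  constructor
  intro a b sq
  have w' : (homOf a).left ≫ (homOf fsl).left = (homOf u).left ≫ (homOf b).left :=
    congrArg (fun q : U ⟶ Y => (homOf q).left) sq.w
  haveI := h (homOf fsl).left hf
  have sq' : CommSq (homOf a).left (homOf u).left (homOf fsl).left (homOf b).left := ⟨w'⟩
  have hover : sq'.lift ≫ X.obj.hom = V.obj.hom := by
    rw [← Over.w (homOf fsl), ← Category.assoc, sq'.fac_right]
    exact Over.w (homOf b)
  exact ⟨⟨⟨ObjectProperty.homMk (Over.homMk sq'.lift hover), slice_hom_ext T (by exact sq'.fac_left),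
    slice_hom_ext T (by exact sq'.fac_right)⟩⟩⟩

include hTS in
theorem anodyne_down {U V : TribeSlice T C} {u : U ⟶ V}
    (h : Anodyne TS.toClan u) : Anodyne T.toClan (homOf u).left := by
  intro X Y p' hp'
  constructor
  intro a b sq
  obtain ⟨R, r₁, r₂, pbR⟩ := T.carrable b hp'
  have hr₁ : T.fib r₁ := T.fib_baseChange pbR hp'
  let Robj : TribeSlice T C := ⟨Over.mk (r₁ ≫ V.obj.hom), T.fib_comp hr₁ V.property⟩
  let rA : Robj ⟶ V := ObjectProperty.homMk (Over.homMk r₁ rfl)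
  have hrA : TS.fib rA := (hTS rA).mpr hr₁
  have hcone : (homOf u).left ≫ b = a ≫ p' := sq.w.symm
  have hxover : pbR.lift (homOf u).left a hcone ≫ (r₁ ≫ V.obj.hom) = U.obj.hom := by
    rw [← Category.assoc, pbR.lift_fst]
    exact Over.w (homOf u)
  let xA : U ⟶ Robj := ObjectProperty.homMk (Over.homMk (pbR.lift (homOf u).left a hcone) hxover)
  have comm : xA ≫ rA = u ≫ 𝟙 V := slice_hom_ext T (by
    show pbR.lift (homOf u).left a hcone ≫ r₁ = (homOf u).left ≫ 𝟙 V.obj.left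
    rw [Category.comp_id, pbR.lift_fst])
  haveI := h rA hrA
  have sq2 : CommSq xA u rA (𝟙 V) := ⟨comm⟩
  have fl : (homOf u).left ≫ (homOf sq2.lift).left = pbR.lift (homOf u).left a hcone :=
    congrArg (fun q : U ⟶ Robj => (homOf q).left) sq2.fac_left
  have fr : (homOf sq2.lift).left ≫ r₁ = 𝟙 V.obj.left :=
    congrArg (fun q : V ⟶ V => (homOf q).left) sq2.fac_right
  refine ⟨⟨⟨(homOf sq2.lift).left ≫ r₂, ?_, ?_⟩⟩⟩
  · rw [← Category.assoc, fl, pbR.lift_snd]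
  · rw [Category.assoc, ← pbR.w, ← Category.assoc, fr, Category.id_comp]

include hTS in
theorem htp_down {U V : TribeSlice T C} {h k : U ⟶ V} (hh : Homotopic TS h k) :
    Homotopic T (homOf h).left (homOf k).left := by
  obtain ⟨Q, H, h0, h1⟩ := hh
  have hσ : Anodyne T.toClan (homOf Q.σ).left := anodyne_down T TS hTS Q.anodyne_σ
  have e0 : (homOf Q.σ).left ≫ (homOf Q.d₀).left = 𝟙 V.obj.left :=
    congrArg (fun q : V ⟶ V => (homOf q).left) Q.σ_d₀
  have e1 : (homOf Q.σ).left ≫ (homOf Q.d₁).left = 𝟙 V.obj.left :=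
    congrArg (fun q : V ⟶ V => (homOf q).left) Q.σ_d₁
  have main := homotopic_of_common_section (T := T) hσ e0 e1 (homOf H).left
  exact htp_congr main (congrArg (fun q : U ⟶ V => (homOf q).left) h0)
    (congrArg (fun q : U ⟶ V => (homOf q).left) h1)

include hTS in
theorem good_he {Y' M : TribeSlice T C} {P : M ⟶ Y'} (hP : TS.fib P)
    {σ : Y' ⟶ M} (hσ : Anodyne TS.toClan σ) (hsec : σ ≫ P = 𝟙 Y') :
    IsHomotopyEquiv TS P := by
  have hP0 : T.fib (homOf P).left := (hTS P).mp hP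
  have hσ0 : Anodyne T.toClan (homOf σ).left := anodyne_down T TS hTS hσ
  have hsec0 : (homOf σ).left ≫ (homOf P).left = 𝟙 Y'.obj.left :=
    congrArg (fun q : Y' ⟶ Y' => (homOf q).left) hsec
  obtain ⟨V, pr₁, pr₂, pbV⟩ := T.carrable (homOf P).left hP0
  have hccone : ((homOf P).left ≫ (homOf σ).left) ≫ (homOf P).left =
      𝟙 M.obj.left ≫ (homOf P).left := by
    rw [Category.assoc, hsec0, Category.comp_id, Category.id_comp]
  obtain ⟨W, σw, π, hσw, hπ, hfact⟩ :=
    T.exists_fact (pbV.lift (𝟙 M.obj.left) (𝟙 M.obj.left) rfl)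
  have heq : (homOf σ).left ≫ pbV.lift (𝟙 M.obj.left) (𝟙 M.obj.left) rfl =
      (homOf σ).left ≫ pbV.lift ((homOf P).left ≫ (homOf σ).left) (𝟙 M.obj.left) hccone := by
    apply pbV.hom_ext
    · slice_lhs 2 3 => rw [pbV.lift_fst]
      slice_rhs 2 3 => rw [pbV.lift_fst]
      slice_rhs 1 2 => rw [hsec0]
      simp
    · slice_lhs 2 3 => rw [pbV.lift_snd]
      slice_rhs 2 3 => rw [pbV.lift_snd]
  obtain ⟨Qv⟩ := existsPathObj T V
  obtain ⟨K, hK0, hK1⟩ := exists_homotopy_of_anodyne_eq hσ0 heq Qv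
  obtain ⟨H, hH⟩ := transport hπ Qv (e := σw) (K := K) (by rw [hK0]; exact hfact.symm)
  have hHcc : H ≫ π =
      pbV.lift ((homOf P).left ≫ (homOf σ).left) (𝟙 M.obj.left) hccone := by
    rw [hH, hK1]
  have fibpr₂ : T.fib pr₂ := T.fib_baseChange pbV.flip hP0
  have hMw : pr₁ ≫ M.obj.hom = pr₂ ≫ M.obj.hom := by
    rw [← Over.w (homOf P), ← Category.assoc, ← Category.assoc, pbV.w]
  let Wobj : TribeSlice T C :=
    ⟨Over.mk (π ≫ pr₂ ≫ M.obj.hom), T.fib_comp hπ (T.fib_comp fibpr₂ M.property)⟩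
  have hσwover : σw ≫ π ≫ pr₂ ≫ M.obj.hom = M.obj.hom := by
    slice_lhs 1 2 => rw [hfact]
    slice_lhs 1 2 => rw [pbV.lift_snd]
    simp
  let σwA : M ⟶ Wobj := ObjectProperty.homMk (Over.homMk σw hσwover)
  have hw0over : (π ≫ pr₁) ≫ M.obj.hom = π ≫ pr₂ ≫ M.obj.hom := by
    rw [Category.assoc, hMw]
  let w0A : Wobj ⟶ M := ObjectProperty.homMk (Over.homMk (π ≫ pr₁) hw0over)
  let w1A : Wobj ⟶ M := ObjectProperty.homMk (Over.homMk (π ≫ pr₂) (Category.assoc _ _ _))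
  have hHover : H ≫ π ≫ pr₂ ≫ M.obj.hom = M.obj.hom := by
    slice_lhs 1 2 => rw [hHcc]
    slice_lhs 1 2 => rw [pbV.lift_snd]
    simp
  let HA : M ⟶ Wobj := ObjectProperty.homMk (Over.homMk H hHover)
  have hσwA : Anodyne TS.toClan σwA := anodyne_up T TS hTS (by exact hσw)
  have hs0 : σwA ≫ w0A = 𝟙 M := slice_hom_ext T (by
    show σw ≫ π ≫ pr₁ = 𝟙 M.obj.left
    slice_lhs 1 2 => rw [hfact]
    slice_lhs 1 2 => rw [pbV.lift_fst]
    try simp)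
  have hs1 : σwA ≫ w1A = 𝟙 M := slice_hom_ext T (by
    show σw ≫ π ≫ pr₂ = 𝟙 M.obj.left
    slice_lhs 1 2 => rw [hfact]
    slice_lhs 1 2 => rw [pbV.lift_snd]
    try simp)
  have main := homotopic_of_common_section (T := TS) hσwA hs0 hs1 HA
  have e1 : HA ≫ w0A = P ≫ σ := slice_hom_ext T (by
    show H ≫ π ≫ pr₁ = (homOf P).left ≫ (homOf σ).left
    slice_lhs 1 2 => rw [hHcc]
    slice_lhs 1 2 => rw [pbV.lift_fst]
    try simp)
  have e2 : HA ≫ w1A = 𝟙 M := slice_hom_ext T (by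
    show H ≫ π ≫ pr₂ = 𝟙 M.obj.left
    slice_lhs 1 2 => rw [hHcc]
    slice_lhs 1 2 => rw [pbV.lift_snd]
    try simp)
  exact ⟨σ, htp_congr main e1 e2, Homotopic.of_eq' TS hsec⟩

include hTS in
theorem he_up {U V : TribeSlice T C} {u : U ⟶ V}
    (h0 : IsHomotopyEquiv T (homOf u).left) : IsHomotopyEquiv TS u := by
  obtain ⟨M, j, p, hj, hp, hjp⟩ := TS.exists_fact u
  have hj0 : Anodyne T.toClan (homOf j).left := anodyne_down T TS hTS hj
  have hp0fib : T.fib (homOf p).left := (hTS p).mp hp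
  have hup : (homOf j).left ≫ (homOf p).left = (homOf u).left :=
    congrArg (fun q : U ⟶ V => (homOf q).left) hjp
  have hjhe : IsHomotopyEquiv T (homOf j).left := isHomotopyEquiv_of_anodyne hj0
  have hphe : IsHomotopyEquiv T (homOf p).left := he_cancel_left (by rwa [hup]) hjhe
  obtain ⟨s, hs⟩ := exists_section hp0fib hphe
  have hsover : s ≫ M.obj.hom = V.obj.hom := by
    rw [← Over.w (homOf p), ← Category.assoc, hs, Category.id_comp]
  let sA : V ⟶ M := ObjectProperty.homMk (Over.homMk s hsover)
  have hsA : sA ≫ p = 𝟙 V := slice_hom_ext T (by exact hs)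
  obtain ⟨N, j₂, q, hj₂, hq, hj₂q⟩ := TS.exists_fact sA
  have good1 : IsHomotopyEquiv TS (q ≫ p) :=
    good_he T TS hTS (TS.fib_comp hq hp) hj₂ (by rw [← Category.assoc, hj₂q, hsA])
  have hj₂0 : Anodyne T.toClan (homOf j₂).left := anodyne_down T TS hTS hj₂
  have hshe : IsHomotopyEquiv T s := by
    have hid : IsHomotopyEquiv T (s ≫ (homOf p).left) := by
      rw [hs]; exact isHomotopyEquiv_id T _
    exact he_cancel_right hid hphe
  have hq0 : (homOf j₂).left ≫ (homOf q).left = s :=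
    congrArg (fun qq : V ⟶ M => (homOf qq).left) hj₂q
  have hqhe : IsHomotopyEquiv T (homOf q).left :=
    he_cancel_left (by rwa [hq0]) (isHomotopyEquiv_of_anodyne hj₂0)
  obtain ⟨s₂, hs₂⟩ := exists_section ((hTS q).mp hq) hqhe
  have hs₂over : s₂ ≫ N.obj.hom = M.obj.hom := by
    rw [← Over.w (homOf q), ← Category.assoc, hs₂, Category.id_comp]
  let s₂A : M ⟶ N := ObjectProperty.homMk (Over.homMk s₂ hs₂over)
  have hs₂A : s₂A ≫ q = 𝟙 M := slice_hom_ext T (by exact hs₂)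
  obtain ⟨N₂, j₃, q₂, hj₃, hq₂, hj₃q₂⟩ := TS.exists_fact s₂A
  have good2 : IsHomotopyEquiv TS (q₂ ≫ q) :=
    good_he T TS hTS (TS.fib_comp hq₂ hq) hj₃ (by rw [← Category.assoc, hj₃q₂, hs₂A])
  have hqS : IsHomotopyEquiv TS q := he_two_of_six good2 good1
  have hpS : IsHomotopyEquiv TS p := he_cancel_left good1 hqS
  have hfinal : IsHomotopyEquiv TS (j ≫ p) :=
    isHomotopyEquiv_comp (isHomotopyEquiv_of_anodyne hj) hpS
  rwa [hjp] at hfinal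

include hTS in
theorem he_iff {U V : TribeSlice T C} (u : U ⟶ V) :
    IsHomotopyEquiv TS u ↔ IsHomotopyEquiv T (homOf u).left := by
  constructor
  · rintro ⟨g, h1, h2⟩
    exact ⟨(homOf g).left, htp_down T TS hTS h1, htp_down T TS hTS h2⟩
  · exact he_up T TS hTS

end SliceLemmas


/-- If `f : A ⟶ B` is a fibration in a tribe `E`, then the summation
functor `Σ_f : E(A) ⥤ E(B)`, `(X, p) ↦ (X, p ≫ f)`, preserves and reflects homotopy
equivalences: a morphism `w` of `E(A)` is a homotopy equivalence in `E(A)` iff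
`Σ_f w` is a homotopy equivalence in `E(B)`.  Here `TA` and `TB` are the canonical
tribe structures on the local tribes `E(A)` and `E(B)`. -/
theorem summation_preserves_reflects_homotopyEquiv
    {E : Type u} [Category.{v} E] (T : Tribe E) {A B : E} (f : A ⟶ B) (hf : T.fib f)
    (TA : Tribe (TribeSlice T A)) (TB : Tribe (TribeSlice T B))
    (hTA : ∀ {U V : TribeSlice T A} (u : U ⟶ V),
      TA.fib u ↔ T.fib (TribeSlice.homOf u).left)
    (hTB : ∀ {U V : TribeSlice T B} (u : U ⟶ V),
      TB.fib u ↔ T.fib (TribeSlice.homOf u).left)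
    {X Y : TribeSlice T A} (w : X ⟶ Y) :
    IsHomotopyEquiv TA w ↔
      IsHomotopyEquiv TB
        (X := ⟨Over.mk (X.obj.hom ≫ f), T.fib_comp X.property hf⟩)
        (Y := ⟨Over.mk (Y.obj.hom ≫ f), T.fib_comp Y.property hf⟩)
        (ObjectProperty.homMk (Over.homMk (TribeSlice.homOf w).left (by simp))) := by
  rw [he_iff T TA hTA w, he_iff T TB hTB]
  exact Iff.rfl
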